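/- Let q be a prime power and 0 < R < 1 a real number. For each n ≥ 2, let C_n be a code of length n over F_{q^n} (i.e. m = n) of size M(n) with minimum rank distance d(n) that is on GV, where log_q M(n) = R·n² (e.g. M(n) = q^{⌈Rn²⌉}). Then d(n)/n → 1 − √R as n → ∞. -/

import Mathlib

/-- Number of `m × n` matrices over `F` of rank at most `t`. -/
noncomputable def ballCount (F : Type*) [Field F] [Fintype F] (m n t : ℕ) : ℕ :=
  Nat.card {A : Matrix (Fin m) (Fin n) F // A.rank ≤ t}

/-- `d` is the minimum rank distance of the code `C` (a set of `m × n` matrices over `F`). -/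
def IsMinRankDist {F : Type*} [Field F] [Fintype F] {m n : ℕ}
    (C : Set (Matrix (Fin m) (Fin n) F)) (d : ℕ) : Prop :=
  (∀ c₁ ∈ C, ∀ c₂ ∈ C, c₁ ≠ c₂ → d ≤ (c₁ - c₂).rank) ∧
  ∃ c₁ ∈ C, ∃ c₂ ∈ C, c₁ ≠ c₂ ∧ (c₁ - c₂).rank = d

open Matrix Filter

set_option linter.unusedSectionVars false

section Counting

variable {F : Type*} [Field F] [Fintype F]

lemma GV.card_matrix (t s q : ℕ) (hq : Fintype.card F = q) :
    Nat.card (Matrix (Fin t) (Fin s) F) = q ^ (t * s) := by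
  simp [Nat.card_eq_fintype_card, Matrix, hq, ← pow_mul, mul_comm]

lemma GV.rank_pos_of_ne_zero {m n : ℕ} (A : Matrix (Fin m) (Fin n) F) (h : A ≠ 0) :
    0 < A.rank := by
  rw [Matrix.rank_eq_finrank_span_cols]
  have : ∃ j, Aᵀ j ≠ 0 := by
    by_contra hc
    push_neg at hc
    apply h
    ext i j
    have := congrFun (hc j) i
    simpa using this
  obtain ⟨j, hj⟩ := this
  have hmem : Aᵀ j ∈ Submodule.span F (Set.range Aᵀ) :=
    Submodule.subset_span (Set.mem_range_self j)
  rw [Module.finrank_pos_iff]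
  exact ⟨⟨⟨Aᵀ j, hmem⟩, 0, fun hh => hj (congrArg Subtype.val hh)⟩⟩

lemma GV.rank_blocks_le {t s : ℕ} (P : (Matrix (Fin t) (Fin t) F)ˣ)
    (Q : Matrix (Fin t) (Fin s) F) (S : Matrix (Fin s) (Fin t) F) :
    (fromBlocks P.val Q S (S * (P⁻¹).val * Q)).rank ≤ t := by
  have h : fromBlocks P.val Q S (S * (P⁻¹).val * Q)
      = fromRows (1 : Matrix (Fin t) (Fin t) F) (S * (P⁻¹).val) * fromCols P.val Q := by
    rw [fromRows_mul, Matrix.one_mul, mul_fromCols,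
      Matrix.mul_assoc S (P⁻¹).val P.val, Units.inv_mul,
      Matrix.mul_one, fromRows_fromCols_eq_fromBlocks]
  rw [h]
  calc (fromRows (1 : Matrix (Fin t) (Fin t) F) (S * (P⁻¹).val) * fromCols P.val Q).rank
      ≤ (fromCols P.val Q).rank := rank_mul_le_right _ _
    _ ≤ Fintype.card (Fin t) := rank_le_card_height _
    _ = t := Fintype.card_fin t

lemma GV.ballCount_lower (q t s : ℕ) (hq : Fintype.card F = q) :
    q ^ (t * t + 2 * (t * s)) ≤ q ^ t * ballCount F (t + s) (t + s) t := by
  classical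
  set n := t + s with hn
  have e : Fin t ⊕ Fin s ≃ Fin n := finSumFinEquiv
  set D := (Matrix (Fin t) (Fin t) F)ˣ × Matrix (Fin t) (Fin s) F × Matrix (Fin s) (Fin t) F
  let φ : D → {A : Matrix (Fin n) (Fin n) F // A.rank ≤ t} := fun x =>
    ⟨(reindex e e) (fromBlocks x.1.val x.2.1 x.2.2 (x.2.2 * (x.1⁻¹).val * x.2.1)), by
      rw [rank_reindex]; exact GV.rank_blocks_le _ _ _⟩
  have hφ : Function.Injective φ := by
    intro a b hab
    have h1 : fromBlocks a.1.val a.2.1 a.2.2 (a.2.2 * (a.1⁻¹).val * a.2.1)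
        = fromBlocks b.1.val b.2.1 b.2.2 (b.2.2 * (b.1⁻¹).val * b.2.1) := by
      have := congrArg Subtype.val hab
      exact (reindex e e).injective this
    have hP : a.1.val = b.1.val := by
      have := congrArg Matrix.toBlocks₁₁ h1; simpa [toBlocks_fromBlocks₁₁] using this
    have hQ : a.2.1 = b.2.1 := by
      have := congrArg Matrix.toBlocks₁₂ h1; simpa [toBlocks_fromBlocks₁₂] using this
    have hS : a.2.2 = b.2.2 := by
      have := congrArg Matrix.toBlocks₂₁ h1; simpa [toBlocks_fromBlocks₂₁] using this
    exact Prod.ext (Units.ext hP) (Prod.ext hQ hS)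
  have hcard : Nat.card D ≤ ballCount F n n t := Nat.card_le_card_of_injective φ hφ
  have hq2 : 2 ≤ q := hq ▸ Fintype.one_lt_card
  have hGL : q ^ (t * t) ≤ q ^ t * Nat.card (Matrix (Fin t) (Fin t) F)ˣ := by
    have hcGL : Nat.card (Matrix (Fin t) (Fin t) F)ˣ = ∏ i : Fin t, (q ^ t - q ^ (i : ℕ)) := by
      rw [← hq]; exact Matrix.card_GL_field t
    have hfac : ∀ i : Fin t, q ^ (t - 1) ≤ q ^ t - q ^ (i : ℕ) := by
      intro i
      have hi : (i : ℕ) ≤ t - 1 := by omega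
      have h1 : q ^ (i : ℕ) ≤ q ^ (t - 1) := Nat.pow_le_pow_right (by omega) hi
      have h2 : q ^ (t - 1) * 2 ≤ q ^ t := by
        have ht0 : t ≠ 0 := by have := i.isLt; omega
        have : q ^ t = q ^ (t - 1) * q ^ 1 := by rw [← pow_add]; congr 1; omega
        rw [this, pow_one]; exact Nat.mul_le_mul_left _ hq2
      omega
    have hprod : q ^ ((t - 1) * t) ≤ ∏ i : Fin t, (q ^ t - q ^ (i : ℕ)) := by
      calc q ^ ((t - 1) * t) = ∏ _i : Fin t, q ^ (t - 1) := by
            rw [Finset.prod_const, ← pow_mul]; simp [mul_comm]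
        _ ≤ ∏ i : Fin t, (q ^ t - q ^ (i : ℕ)) := Finset.prod_le_prod' fun i _ => hfac i
    rw [hcGL]
    calc q ^ (t * t) ≤ q ^ (t + (t - 1) * t) := Nat.pow_le_pow_right (by omega)
          (by cases t with
              | zero => simp
              | succ k => rw [Nat.succ_mul]; simp; omega)
      _ = q ^ t * q ^ ((t - 1) * t) := pow_add q _ _
      _ ≤ q ^ t * ∏ i : Fin t, (q ^ t - q ^ (i : ℕ)) := Nat.mul_le_mul_left _ hprod
  have hDcard : Nat.card D
      = Nat.card (Matrix (Fin t) (Fin t) F)ˣ * (q ^ (t * s) * q ^ (s * t)) := by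
    rw [Nat.card_prod, Nat.card_prod, GV.card_matrix t s q hq, GV.card_matrix s t q hq]
  calc q ^ (t * t + 2 * (t * s)) = q ^ (t * t) * (q ^ (t * s) * q ^ (s * t)) := by
        rw [← pow_add, ← pow_add]; congr 1; ring
    _ ≤ (q ^ t * Nat.card (Matrix (Fin t) (Fin t) F)ˣ) * (q ^ (t * s) * q ^ (s * t)) :=
        Nat.mul_le_mul_right _ hGL
    _ = q ^ t * Nat.card D := by rw [hDcard]; ring
    _ ≤ q ^ t * ballCount F n n t := Nat.mul_le_mul_left _ hcard

lemma GV.exists_spanning_cols {n t : ℕ} (ht : t ≤ n) (A : Matrix (Fin n) (Fin n) F)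
    (hA : A.rank ≤ t) :
    ∃ f : Fin t ↪ Fin n, ∀ j, Aᵀ j ∈ Submodule.span F (Set.range (Aᵀ ∘ f)) := by
  classical
  obtain ⟨b, hbsub, hbspan, hbli⟩ := exists_linearIndependent F (Set.range Aᵀ)
  have hbfin : b.Finite := (Set.finite_range Aᵀ).subset hbsub
  haveI := hbfin.fintype
  have hcard : b.toFinset.card ≤ t := by
    have h1 : Module.finrank F (Submodule.span F b) = b.toFinset.card :=
      finrank_span_set_eq_card hbli
    rw [← h1, hbspan]
    rw [Matrix.rank_eq_finrank_span_cols] at hA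
    exact hA
  have hpre : ∀ v : b, ∃ j : Fin n, Aᵀ j = (v : Fin n → F) := fun v => hbsub v.2
  choose c hc using hpre
  have hcinj : Function.Injective c := fun v w h =>
    Subtype.ext (by rw [← hc v, ← hc w, h])
  set J : Finset (Fin n) := Finset.univ.image c with hJ
  have hJcard : J.card ≤ t := by
    rw [hJ, Finset.card_image_of_injective _ hcinj, Finset.card_univ]
    rw [← Set.toFinset_card]
    exact hcard
  obtain ⟨K, hJK, -, hKcard⟩ := Finset.exists_subsuperset_card_eq (J.subset_univ) hJcard
    (by simp [ht])
  set g := K.orderIsoOfFin hKcard with hg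
  refine ⟨⟨fun i => (g i : Fin n), fun i i' h => g.injective (Subtype.ext h)⟩, fun j => ?_⟩
  have h1 : Aᵀ j ∈ Submodule.span F (Set.range Aᵀ) :=
    Submodule.subset_span (Set.mem_range_self j)
  rw [← hbspan] at h1
  have hsub : b ⊆ Set.range (Aᵀ ∘ fun i => (g i : Fin n)) := by
    intro v hv
    have hmem : c ⟨v, hv⟩ ∈ K := hJK (Finset.mem_image_of_mem c (Finset.mem_univ _))
    refine ⟨g.symm ⟨c ⟨v, hv⟩, hmem⟩, ?_⟩
    show Aᵀ ((g (g.symm ⟨c ⟨v, hv⟩, hmem⟩) : Fin n)) = v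
    rw [OrderIso.apply_symm_apply]
    exact hc ⟨v, hv⟩
  exact Submodule.span_mono hsub h1

lemma GV.ballCount_upper (q t s : ℕ) (hq : Fintype.card F = q) :
    ballCount F (t + s) (t + s) t ≤ (t + s) ^ t * q ^ (t * t + 2 * (t * s)) := by
  classical
  set n := t + s with hn
  set D := Σ f : Fin t ↪ Fin n,
    (Matrix (Fin n) (Fin t) F × (Fin t → {j : Fin n // j ∉ Set.range f} → F)) with hD
  let Y : ∀ (f : Fin t ↪ Fin n), (Fin t → {j : Fin n // j ∉ Set.range f} → F) →
      Matrix (Fin t) (Fin n) F := fun f Z i j =>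
    if h : j ∈ Set.range f then (if f i = j then 1 else 0) else Z i ⟨j, h⟩
  let ψ : D → {A : Matrix (Fin n) (Fin n) F // A.rank ≤ t} := fun x =>
    ⟨x.2.1 * Y x.1 x.2.2, by
      calc (x.2.1 * Y x.1 x.2.2).rank ≤ (Y x.1 x.2.2).rank := rank_mul_le_right _ _
        _ ≤ Fintype.card (Fin t) := rank_le_card_height _
        _ = t := Fintype.card_fin t⟩
  have hψ : Function.Surjective ψ := by
    rintro ⟨A, hA⟩
    obtain ⟨f, hf⟩ := GV.exists_spanning_cols (Nat.le_add_right t s) A hA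
    have hcoef : ∀ jj : {j : Fin n // j ∉ Set.range f},
        ∃ cf : Fin t → F, ∑ i, cf i • (Aᵀ ∘ f) i = Aᵀ (jj : Fin n) := by
      intro jj
      have := hf (jj : Fin n)
      rwa [Submodule.mem_span_range_iff_exists_fun] at this
    choose coefs hcoefs using hcoef
    set X : Matrix (Fin n) (Fin t) F := Matrix.of fun i k => A i (f k) with hX
    refine ⟨⟨f, X, fun i jj => coefs jj i⟩, ?_⟩
    apply Subtype.ext
    show X * (Y f _) = A
    ext i j
    rw [Matrix.mul_apply]
    by_cases h : j ∈ Set.range f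
    · obtain ⟨i₀, hi₀⟩ := h
      have hYval : ∀ k, Y f (fun i jj => coefs jj i) k j = if k = i₀ then 1 else 0 := by
        intro k
        have : (f k = j) = (k = i₀) := by
          rw [← hi₀]
          exact propext ⟨fun hh => f.injective hh, fun hh => by rw [hh]⟩
        simp only [Y, this]
        exact dif_pos ⟨i₀, hi₀⟩
      rw [Finset.sum_congr rfl fun k _ => by rw [hYval k]]
      rw [Finset.sum_eq_single i₀ (fun k _ hk => by simp [hk]) (by simp)]
      rw [hX]
      simp [hi₀]
    · have hYval : ∀ k, Y f (fun i jj => coefs jj i) k j = coefs ⟨j, h⟩ k := by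
        intro k; simp only [Y, dif_neg h]
      rw [Finset.sum_congr rfl fun k _ => by rw [hYval k]]
      have := congrFun (hcoefs ⟨j, h⟩) i
      simp only [Finset.sum_apply, Pi.smul_apply, Function.comp_apply, smul_eq_mul] at this
      rw [Matrix.transpose_apply] at this
      rw [← this]
      apply Finset.sum_congr rfl
      intro k _
      rw [hX, mul_comm]
      simp [Matrix.transpose_apply]
      exact Or.inl rfl
  have hcard : ballCount F n n t ≤ Nat.card D := Nat.card_le_card_of_surjective ψ hψ
  have hsub : ∀ f : Fin t ↪ Fin n, Fintype.card {j : Fin n // j ∉ Set.range f} = s := by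
    intro f
    rw [Fintype.card_subtype_compl]
    have h2 : Fintype.card {j : Fin n // j ∈ Set.range ⇑f} = t := by
      rw [Fintype.card_eq.mpr ⟨(Equiv.ofInjective ⇑f f.injective).symm⟩, Fintype.card_fin]
    rw [h2]
    simp [hn]
  have hfun : ∀ f : Fin t ↪ Fin n,
      Fintype.card (Matrix (Fin n) (Fin t) F × (Fin t → {j : Fin n // j ∉ Set.range f} → F))
        = q ^ (n * t) * q ^ (s * t) := by
    intro f
    rw [Fintype.card_prod]
    congr 1
    · rw [← Nat.card_eq_fintype_card]; exact GV.card_matrix n t q hq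
    · rw [Fintype.card_fun, Fintype.card_fun, hsub f, hq, Fintype.card_fin, ← pow_mul]
  have hDcard : Nat.card D = Fintype.card (Fin t ↪ Fin n) * (q ^ (n * t) * q ^ (s * t)) := by
    rw [Nat.card_eq_fintype_card]
    rw [Fintype.card_sigma]
    rw [Finset.sum_congr rfl fun f _ => hfun f, Finset.sum_const, Finset.card_univ,
      smul_eq_mul]
  calc ballCount F n n t ≤ Nat.card D := hcard
    _ = Fintype.card (Fin t ↪ Fin n) * (q ^ (n * t) * q ^ (s * t)) := hDcard
    _ ≤ n ^ t * (q ^ (n * t) * q ^ (s * t)) := by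
        apply Nat.mul_le_mul_right
        rw [Fintype.card_embedding_eq]
        simpa using Nat.descFactorial_le_pow n t
    _ = n ^ t * q ^ (t * t + 2 * (t * s)) := by
        rw [← pow_add]
        congr 1
        simp [hn]; ring

end Counting

section Analysis

lemma GV.tendsto_of_sq (R : ℝ) (u : ℕ → ℝ) (hu1 : ∀ᶠ n in atTop, u n ≤ 1)
    (h : Tendsto (fun n => u n * (2 - u n)) atTop (nhds (1 - R))) :
    Tendsto u atTop (nhds (1 - Real.sqrt R)) := by
  have h1 : Tendsto (fun n => (1 - u n) ^ 2) atTop (nhds R) := by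
    have h2 := (tendsto_const_nhds (x := (1 : ℝ)) (f := atTop)).sub h
    have h3 : (fun n => 1 - u n * (2 - u n)) = fun n => (1 - u n) ^ 2 := by
      funext n; ring
    rw [h3] at h2
    simpa using h2
  have h2 : Tendsto (fun n => Real.sqrt ((1 - u n) ^ 2)) atTop (nhds (Real.sqrt R)) :=
    (Real.continuous_sqrt.continuousAt.tendsto).comp h1
  have h3 : Tendsto (fun n => 1 - u n) atTop (nhds (Real.sqrt R)) := by
    apply h2.congr'
    filter_upwards [hu1] with n hn
    rw [Real.sqrt_sq (by linarith)]
  have h4 := (tendsto_const_nhds (x := (1 : ℝ)) (f := atTop)).sub h3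
  simpa using h4

end Analysis

/-- For square codes (`m = n`) of constant rate `R` on GV, `d(n)/n → 1 - √R`. -/
theorem stmt8 (q : ℕ) (F : Type*) [Field F] [Fintype F] (hq : Fintype.card F = q)
    (R : ℝ) (hR0 : 0 < R) (hR1 : R < 1) (M d : ℕ → ℕ)
    (hlog : ∀ n, 2 ≤ n → Real.logb q (M n) = R * (n : ℝ) ^ 2)
    (hcode : ∀ n, 2 ≤ n → ∃ C : Set (Matrix (Fin n) (Fin n) F),
      Nat.card C = M n ∧ IsMinRankDist C (d n) ∧
      (M n - 1) * ballCount F n n (d n - 1) < q ^ (n * n) ∧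
      q ^ (n * n) ≤ M n * ballCount F n n (d n - 1)) :
    Filter.Tendsto (fun n => (d n : ℝ) / n) Filter.atTop (nhds (1 - Real.sqrt R)) := by
  classical
  have hq2 : 2 ≤ q := hq ▸ Fintype.one_lt_card
  set L := Real.log q with hLdef
  have hL : 0 < L := Real.log_pos (by exact_mod_cast hq2)
  set t : ℕ → ℕ := fun n => d n - 1 with ht
  -- basic bounds on d
  have hdb : ∀ n, 2 ≤ n → 1 ≤ d n ∧ d n ≤ n := by
    intro n hn
    obtain ⟨C, hC, ⟨hmin, c₁, hc₁, c₂, hc₂, hne, hrank⟩, hgv1, hgv2⟩ := hcode n hn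
    constructor
    · rw [← hrank]
      have : c₁ - c₂ ≠ 0 := sub_ne_zero_of_ne hne
      exact GV.rank_pos_of_ne_zero _ this
    · rw [← hrank]
      calc (c₁ - c₂).rank ≤ Fintype.card (Fin n) := rank_le_card_height _
        _ = n := Fintype.card_fin n
  -- M n ≥ 1
  have hM1 : ∀ n, 2 ≤ n → 1 ≤ M n := by
    intro n hn
    obtain ⟨C, hC, hmd, hgv1, hgv2⟩ := hcode n hn
    by_contra hc
    have : M n = 0 := by omega
    rw [this] at hgv2
    simp at hgv2
    have : 0 < q ^ (n * n) := Nat.pow_pos (by omega)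
    omega
  have hlogM : ∀ n, 2 ≤ n → Real.log (M n) = R * (n : ℝ) ^ 2 * L := by
    intro n hn
    have := hlog n hn
    rw [Real.logb, div_eq_iff hL.ne'] at this
    exact this
  -- eventually M n ≥ 2
  have htendR : Tendsto (fun n : ℕ => R * (n : ℝ) ^ 2 * L) atTop atTop := by
    apply Tendsto.atTop_mul_const hL
    apply Tendsto.const_mul_atTop hR0
    exact (tendsto_pow_atTop (two_ne_zero)).comp tendsto_natCast_atTop_atTop
  have hM2 : ∀ᶠ n in atTop, 2 ≤ M n := by
    filter_upwards [htendR.eventually_ge_atTop (Real.log 2), eventually_ge_atTop 2]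
      with n h1 h2
    by_contra hc
    have hMn : M n = 1 := by have := hM1 n h2; omega
    have := hlogM n h2
    rw [hMn] at this
    simp at this
    rcases this with (h | h) | h
    · exact absurd h hR0.ne'
    · omega
    · exact absurd h hL.ne'
  -- the ℕ-level GV inequalities
  set E : ℕ → ℕ := fun n => t n * t n + 2 * (t n * (n - t n)) with hE
  have ineq1 : ∀ n, 2 ≤ n → q ^ (n * n) ≤ M n * (n ^ t n * q ^ E n) := by
    intro n hn
    obtain ⟨C, hC, hmd, hgv1, hgv2⟩ := hcode n hn
    have hts : t n + (n - t n) = n := by have := hdb n hn; simp [ht]; omega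
    have h1 := GV.ballCount_upper (F := F) q (t n) (n - t n) hq
    rw [hts] at h1
    calc q ^ (n * n) ≤ M n * ballCount F n n (d n - 1) := hgv2
      _ = M n * ballCount F n n (t n) := rfl
      _ ≤ M n * (n ^ t n * q ^ E n) := Nat.mul_le_mul_left _ h1
  have ineq2 : ∀ n, 2 ≤ n → (M n - 1) * q ^ E n ≤ q ^ (n * n + t n) := by
    intro n hn
    obtain ⟨C, hC, hmd, hgv1, hgv2⟩ := hcode n hn
    have hts : t n + (n - t n) = n := by have := hdb n hn; simp [ht]; omega
    have h1 := GV.ballCount_lower (F := F) q (t n) (n - t n) hq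
    rw [hts] at h1
    calc (M n - 1) * q ^ E n ≤ (M n - 1) * (q ^ t n * ballCount F n n (t n)) :=
          Nat.mul_le_mul_left _ h1
      _ = q ^ t n * ((M n - 1) * ballCount F n n (t n)) := by ring
      _ ≤ q ^ t n * q ^ (n * n) := Nat.mul_le_mul_left _ (le_of_lt hgv1)
      _ = q ^ (n * n + t n) := by rw [← pow_add]; congr 1; ring
  -- pass to the reals
  have hq0 : (0 : ℝ) < (q : ℝ) := by exact_mod_cast (by omega : 0 < q)
  set v : ℕ → ℝ := fun n => (E n : ℝ) / (n : ℝ) ^ 2 with hv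
  have hlo : ∀ᶠ n : ℕ in atTop, (1 - R) - Real.log n / ((n : ℝ) * L) ≤ v n := by
    filter_upwards [eventually_ge_atTop 2] with n hn
    have hn0 : (0 : ℝ) < (n : ℝ) := by exact_mod_cast (by omega : 0 < n)
    have hMne : (M n : ℝ) ≠ 0 := Nat.cast_ne_zero.mpr (by have := hM1 n hn; omega)
    have hcast : ((q : ℝ)) ^ (n * n) ≤ (M n : ℝ) * ((n : ℝ) ^ t n * (q : ℝ) ^ E n) := by
      exact_mod_cast ineq1 n hn
    have hlog1 := Real.log_le_log (by positivity) hcast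
    rw [Real.log_mul hMne (by positivity), Real.log_mul (pow_ne_zero _ hn0.ne')
      (pow_ne_zero _ hq0.ne'), Real.log_pow, Real.log_pow, Real.log_pow,
      hlogM n hn] at hlog1
    have htr : (t n : ℝ) ≤ (n : ℝ) := by
      have h := (hdb n hn).2
      have htn' : t n = d n - 1 := rfl
      have : t n ≤ n := by omega
      exact_mod_cast this
    have hlogn : 0 ≤ Real.log n := Real.log_nonneg (by exact_mod_cast (by omega : 1 ≤ n))
    have h5 : (t n : ℝ) * Real.log n ≤ (n : ℝ) * Real.log n :=
      mul_le_mul_of_nonneg_right htr hlogn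
    have hnn : ((n * n : ℕ) : ℝ) = (n : ℝ) ^ 2 := by push_cast; ring
    rw [hnn] at hlog1
    have key : (1 - R) * ((n : ℝ) ^ 2 * L) - (n : ℝ) * Real.log n ≤ (E n : ℝ) * L := by
      nlinarith [hlog1, h5]
    have hpos : (0 : ℝ) < (n : ℝ) ^ 2 * L := by positivity
    have h6 := (div_le_div_iff_of_pos_right hpos).mpr key
    have e1 : ((1 - R) * ((n : ℝ) ^ 2 * L) - (n : ℝ) * Real.log n) / ((n : ℝ) ^ 2 * L)
        = (1 - R) - Real.log n / ((n : ℝ) * L) := by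
      field_simp
    have e2 : ((E n : ℝ) * L) / ((n : ℝ) ^ 2 * L) = (E n : ℝ) / (n : ℝ) ^ 2 :=
      mul_div_mul_right _ _ hL.ne'
    rw [e1, e2] at h6
    exact h6
  have hhi : ∀ᶠ n : ℕ in atTop, v n ≤ (1 - R) + 1 / (n : ℝ) + Real.log 2 / ((n : ℝ) ^ 2 * L) := by
    filter_upwards [eventually_ge_atTop 2, hM2] with n hn hM2n
    have hn0 : (0 : ℝ) < (n : ℝ) := by exact_mod_cast (by omega : 0 < n)
    have hM2r : (2 : ℝ) ≤ (M n : ℝ) := by exact_mod_cast hM2n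
    have hMcast : ((M n - 1 : ℕ) : ℝ) = (M n : ℝ) - 1 := by
      have := hM1 n hn
      push_cast [Nat.cast_sub this]
      ring
    have hcast : ((M n : ℝ) - 1) * (q : ℝ) ^ E n ≤ (q : ℝ) ^ (n * n + t n) := by
      rw [← hMcast]
      exact_mod_cast ineq2 n hn
    have hpos1 : (0 : ℝ) < (M n : ℝ) - 1 := by linarith
    have hlog2 := Real.log_le_log (by positivity) hcast
    rw [Real.log_mul hpos1.ne' (pow_ne_zero _ hq0.ne'), Real.log_pow, Real.log_pow] at hlog2
    have hMhalf : (M n : ℝ) / 2 ≤ (M n : ℝ) - 1 := by linarith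
    have h7 : Real.log (M n) - Real.log 2 ≤ Real.log ((M n : ℝ) - 1) := by
      rw [← Real.log_div (by linarith : (M n : ℝ) ≠ 0) two_ne_zero]
      exact Real.log_le_log (by positivity) hMhalf
    have htr : (t n : ℝ) ≤ (n : ℝ) := by
      have h := (hdb n hn).2
      have htn' : t n = d n - 1 := rfl
      have : t n ≤ n := by omega
      exact_mod_cast this
    have hcastnn : ((n * n + t n : ℕ) : ℝ) = (n : ℝ) ^ 2 + (t n : ℝ) := by push_cast; ring
    rw [hcastnn] at hlog2
    have hlM := hlogM n hn
    have key2 : (E n : ℝ) * L ≤ (1 - R) * ((n : ℝ) ^ 2 * L) + (n : ℝ) * L + Real.log 2 := by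
      have h8 : (t n : ℝ) * L ≤ (n : ℝ) * L := mul_le_mul_of_nonneg_right htr hL.le
      nlinarith [hlog2, h7, hlM, h8]
    have hpos : (0 : ℝ) < (n : ℝ) ^ 2 * L := by positivity
    have h6 := (div_le_div_iff_of_pos_right hpos).mpr key2
    have e2 : ((E n : ℝ) * L) / ((n : ℝ) ^ 2 * L) = (E n : ℝ) / (n : ℝ) ^ 2 :=
      mul_div_mul_right _ _ hL.ne'
    have e3 : ((1 - R) * ((n : ℝ) ^ 2 * L) + (n : ℝ) * L + Real.log 2) / ((n : ℝ) ^ 2 * L)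
        = (1 - R) + 1 / (n : ℝ) + Real.log 2 / ((n : ℝ) ^ 2 * L) := by
      field_simp
    rw [e2, e3] at h6
    exact h6
  have hloT : Tendsto (fun n : ℕ => (1 - R) - Real.log n / ((n : ℝ) * L)) atTop
      (nhds (1 - R)) := by
    have h9 : Tendsto (fun n : ℕ => Real.log n / (n : ℝ)) atTop (nhds 0) :=
      Real.isLittleO_log_id_atTop.tendsto_div_nhds_zero.comp tendsto_natCast_atTop_atTop
    have h8 : Tendsto (fun n : ℕ => Real.log n / ((n : ℝ) * L)) atTop (nhds 0) := by
      have := h9.div_const L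
      simpa [div_div] using this
    have := (tendsto_const_nhds (x := (1 - R)) (f := atTop)).sub h8
    simpa using this
  have hhiT : Tendsto (fun n : ℕ => (1 - R) + 1 / (n : ℝ) + Real.log 2 / ((n : ℝ) ^ 2 * L))
      atTop (nhds (1 - R)) := by
    have hA : Tendsto (fun n : ℕ => 1 / (n : ℝ)) atTop (nhds 0) :=
      tendsto_one_div_atTop_nhds_zero_nat
    have hC : Tendsto (fun n : ℕ => ((n : ℝ) ^ 2 * L)) atTop atTop :=
      Tendsto.atTop_mul_const hL
        ((tendsto_pow_atTop two_ne_zero).comp tendsto_natCast_atTop_atTop)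
    have hB : Tendsto (fun n : ℕ => Real.log 2 / ((n : ℝ) ^ 2 * L)) atTop (nhds 0) := by
      simpa [div_eq_mul_inv] using hC.inv_tendsto_atTop.const_mul (Real.log 2)
    have := ((tendsto_const_nhds (x := 1 - R) (f := atTop)).add hA).add hB
    simpa using this
  have hvT : Tendsto v atTop (nhds (1 - R)) :=
    tendsto_of_tendsto_of_tendsto_of_le_of_le' hloT hhiT hlo hhi
  set u : ℕ → ℝ := fun n => (t n : ℝ) / n with hu
  have hvu : ∀ᶠ n in atTop, v n = u n * (2 - u n) := by
    filter_upwards [eventually_ge_atTop 2] with n hn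
    have hn0 : (0 : ℝ) < (n : ℝ) := by exact_mod_cast (by omega : 0 < n)
    have htn : t n ≤ n := by
      have h := (hdb n hn).2
      have htn' : t n = d n - 1 := rfl
      omega
    have hEcast : (E n : ℝ)
        = (t n : ℝ) * (t n : ℝ) + 2 * ((t n : ℝ) * ((n : ℝ) - (t n : ℝ))) := by
      simp only [hE]
      push_cast [Nat.cast_sub htn]
      ring
    simp only [hv, hu, hEcast]
    field_simp
    ring
  have huT : Tendsto (fun n => u n * (2 - u n)) atTop (nhds (1 - R)) := hvT.congr' hvu
  have hu1 : ∀ᶠ n in atTop, u n ≤ 1 := by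
    filter_upwards [eventually_ge_atTop 2] with n hn
    have hn0 : (0 : ℝ) < (n : ℝ) := by exact_mod_cast (by omega : 0 < n)
    have htr : (t n : ℝ) ≤ (n : ℝ) := by
      have h := (hdb n hn).2
      have htn' : t n = d n - 1 := rfl
      exact_mod_cast (by omega : t n ≤ n)
    exact div_le_one_of_le₀ htr hn0.le
  have hufin : Tendsto u atTop (nhds (1 - Real.sqrt R)) := GV.tendsto_of_sq R u hu1 huT
  have hfinal : Tendsto (fun n : ℕ => u n + 1 / (n : ℝ)) atTop (nhds (1 - Real.sqrt R)) := by
    simpa using hufin.add tendsto_one_div_atTop_nhds_zero_nat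
  apply hfinal.congr'
  filter_upwards [eventually_ge_atTop 2] with n hn
  have hn0 : (0 : ℝ) < (n : ℝ) := by exact_mod_cast (by omega : 0 < n)
  have hdn : d n = t n + 1 := by
    have h := (hdb n hn).1
    have htn' : t n = d n - 1 := rfl
    omega
  show u n + 1 / (n : ℝ) = (d n : ℝ) / n
  rw [hdn]
  push_cast
  rw [add_div]
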